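/- Under the random-intercept crossed effects design with K ≥ 2, let T be diagonal with nonnegative entries, τ > 0, Q = T + τU, and let Q̄^(r) = Diag(Q^(r))^{−1/2} Q^(r) Diag(Q^(r))^{−1/2} where Q^(r) is Q with the row and column of θ_0 removed. Then Q̄^(r) = I_{p−1} + C^{1/2} Ā^(r) C^{1/2}, where C is the diagonal matrix with entries C[(k,g)] = τ(K−1)·U^(r)[(k,g),(k,g)] / (T[(k,g),(k,g)] + τ·U^(r)[(k,g),(k,g)]), and every diagonal entry of C satisfies 0 < C[(k,g)] ≤ K−1. -/

import Mathlib

open Matrix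

namespace Crossed

/-- Coordinates: `none` is the intercept `θ₀`, `some ⟨k, a⟩` is level `a` of factor `k`. -/
abbrev Idx (K : ℕ) (G : Fin K → ℕ) := Option (Σ k : Fin K, Fin (G k))

/-- Coordinates of the random effects only. -/
abbrev Lvl (K : ℕ) (G : Fin K → ℕ) := Σ k : Fin K, Fin (G k)

/-- The design matrix `V ∈ ℝ^{N×p}`. -/
noncomputable def V (K N : ℕ) (G : Fin K → ℕ) (g : Fin N → ∀ k : Fin K, Fin (G k)) :
    Matrix (Fin N) (Idx K G) ℝ :=
  fun i c => c.elim 1 (fun s => if g i s.1 = s.2 then 1 else 0)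

/-- `U = Vᵀ V`. -/
noncomputable def U (K N : ℕ) (G : Fin K → ℕ) (g : Fin N → ∀ k : Fin K, Fin (G k)) :
    Matrix (Idx K G) (Idx K G) ℝ :=
  (V K N G g)ᵀ * V K N G g

/-- The posterior precision matrix `Q = T + τ U` (`T` diagonal). -/
noncomputable def Q (K N : ℕ) (G : Fin K → ℕ) (g : Fin N → ∀ k : Fin K, Fin (G k))
    (T0 : ℝ) (Tv : Fin K → ℝ) (τ : ℝ) : Matrix (Idx K G) (Idx K G) ℝ :=
  diagonal (fun c => c.elim T0 (fun s => Tv s.1)) + τ • U K N G g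

/-- `Q^(r)`: the matrix `Q` with the row and column of `θ₀` removed. -/
noncomputable def Qr (K N : ℕ) (G : Fin K → ℕ) (g : Fin N → ∀ k : Fin K, Fin (G k))
    (T0 : ℝ) (Tv : Fin K → ℝ) (τ : ℝ) : Matrix (Lvl K G) (Lvl K G) ℝ :=
  (Q K N G g T0 Tv τ).submatrix Option.some Option.some

/-- `Q̄^(r) = Diag(Q^(r))^{−1/2} Q^(r) Diag(Q^(r))^{−1/2}`. -/
noncomputable def Qbarr (K N : ℕ) (G : Fin K → ℕ) (g : Fin N → ∀ k : Fin K, Fin (G k))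
    (T0 : ℝ) (Tv : Fin K → ℝ) (τ : ℝ) : Matrix (Lvl K G) (Lvl K G) ℝ :=
  diagonal (fun c => (Real.sqrt (Qr K N G g T0 Tv τ c c))⁻¹) * Qr K N G g T0 Tv τ *
    diagonal (fun c => (Real.sqrt (Qr K N G g T0 Tv τ c c))⁻¹)

/-- The restricted design matrix `V^(r)`. -/
noncomputable def Vr (K N : ℕ) (G : Fin K → ℕ) (g : Fin N → ∀ k : Fin K, Fin (G k)) :
    Matrix (Fin N) (Lvl K G) ℝ :=
  fun i s => if g i s.1 = s.2 then 1 else 0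

/-- `U^(r) = (V^(r))ᵀ V^(r)`. -/
noncomputable def Ur (K N : ℕ) (G : Fin K → ℕ) (g : Fin N → ∀ k : Fin K, Fin (G k)) :
    Matrix (Lvl K G) (Lvl K G) ℝ :=
  (Vr K N G g)ᵀ * Vr K N G g

/-- `A^(r) = U^(r) − Diag(U^(r))`. -/
noncomputable def Ar (K N : ℕ) (G : Fin K → ℕ) (g : Fin N → ∀ k : Fin K, Fin (G k)) :
    Matrix (Lvl K G) (Lvl K G) ℝ :=
  Ur K N G g - diagonal (fun c => Ur K N G g c c)

/-- `Ā^(r) = (D^(r))^{−1/2} A^(r) (D^(r))^{−1/2}` with `D^(r) = (K−1)·Diag(U^(r))`. -/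
noncomputable def Abar (K N : ℕ) (G : Fin K → ℕ) (g : Fin N → ∀ k : Fin K, Fin (G k)) :
    Matrix (Lvl K G) (Lvl K G) ℝ :=
  diagonal (fun c => (Real.sqrt (((K : ℝ) - 1) * Ur K N G g c c))⁻¹) * Ar K N G g *
    diagonal (fun c => (Real.sqrt (((K : ℝ) - 1) * Ur K N G g c c))⁻¹)

/-- The diagonal entries of `C`:
`C[(k,g)] = τ(K−1)·U^(r)[(k,g),(k,g)] / (T[(k,g),(k,g)] + τ·U^(r)[(k,g),(k,g)])`. -/
noncomputable def Cdiag (K N : ℕ) (G : Fin K → ℕ) (g : Fin N → ∀ k : Fin K, Fin (G k))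
    (Tv : Fin K → ℝ) (τ : ℝ) : Lvl K G → ℝ :=
  fun c => τ * ((K : ℝ) - 1) * Ur K N G g c c / (Tv c.1 + τ * Ur K N G g c c)

/-- `Q̄^(r) = I + C^{1/2} Ā^(r) C^{1/2}` with `C` diagonal with entries
`τ(K−1)U_cc/(T_cc + τU_cc)`, and every diagonal entry of `C` lies in `(0, K−1]`. -/
theorem Qbar_restricted_decomposition (K N : ℕ) (G : Fin K → ℕ)
    (g : Fin N → ∀ k : Fin K, Fin (G k))
    (hK : 2 ≤ K) (hGk : ∀ k, 1 ≤ G k) (hN : 1 ≤ N)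
    (hobs : ∀ (k : Fin K) (a : Fin (G k)), ∃ i, g i k = a)
    (T0 : ℝ) (Tv : Fin K → ℝ) (τ : ℝ)
    (hT0 : 0 ≤ T0) (hTv : ∀ k, 0 ≤ Tv k) (hτ : 0 < τ) :
    Qbarr K N G g T0 Tv τ
      = 1 + diagonal (fun c => Real.sqrt (Cdiag K N G g Tv τ c)) * Abar K N G g *
          diagonal (fun c => Real.sqrt (Cdiag K N G g Tv τ c)) ∧
    ∀ c : Lvl K G, 0 < Cdiag K N G g Tv τ c ∧ Cdiag K N G g Tv τ c ≤ (K : ℝ) - 1 := by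
  -- notation
  have hK1 : (1:ℝ) ≤ (K:ℝ) - 1 := by
    have : (2:ℝ) ≤ (K:ℝ) := by exact_mod_cast hK
    linarith
  have hUrdiag : ∀ c : Lvl K G, 1 ≤ Ur K N G g c c := by
    intro c
    have key : Ur K N G g c c = ∑ i, (if g i c.1 = c.2 then (1:ℝ) else 0) := by
      unfold Ur
      rw [Matrix.mul_apply]
      apply Finset.sum_congr rfl
      intro i _
      simp only [Matrix.transpose_apply, Vr]
      split <;> norm_num
    rw [key]
    obtain ⟨i, hi⟩ := hobs c.1 c.2
    have := Finset.single_le_sum (f := fun i => if g i c.1 = c.2 then (1:ℝ) else 0)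
      (by intro j _; by_cases hj : g j c.1 = c.2 <;> simp [hj]) (Finset.mem_univ i)
    simpa [hi] using this
  have hu : ∀ c : Lvl K G, 0 < Ur K N G g c c := fun c => lt_of_lt_of_le one_pos (hUrdiag c)
  have hq : ∀ c : Lvl K G, 0 < Tv c.1 + τ * Ur K N G g c c := by
    intro c
    have := hTv c.1
    nlinarith [hu c]
  have hU : ∀ c c' : Lvl K G, U K N G g (some c) (some c') = Ur K N G g c c' := by
    intro c c'
    simp [U, Ur, V, Vr, Matrix.mul_apply]
  have hQr : ∀ c c' : Lvl K G, Qr K N G g T0 Tv τ c c'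
      = (if c = c' then Tv c.1 else 0) + τ * Ur K N G g c c' := by
    intro c c'
    simp only [Qr, Q, Matrix.submatrix_apply, Matrix.add_apply, Matrix.smul_apply,
      Matrix.diagonal_apply, hU, smul_eq_mul]
    by_cases h : c = c' <;> simp [h]
  have hQrd : ∀ c : Lvl K G, Qr K N G g T0 Tv τ c c = Tv c.1 + τ * Ur K N G g c c := by
    intro c; rw [hQr]; simp
  have hku : ∀ c : Lvl K G, 0 < ((K:ℝ) - 1) * Ur K N G g c c := by
    intro c; nlinarith [hu c]
  have hCpos : ∀ c : Lvl K G, 0 < Cdiag K N G g Tv τ c := by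
    intro c
    unfold Cdiag
    exact div_pos (mul_pos (mul_pos hτ (by linarith)) (hu c)) (hq c)
  have hC : ∀ c : Lvl K G, Real.sqrt (Cdiag K N G g Tv τ c)
      = Real.sqrt τ * Real.sqrt (((K:ℝ) - 1) * Ur K N G g c c)
        * (Real.sqrt (Tv c.1 + τ * Ur K N G g c c))⁻¹ := by
    intro c
    unfold Cdiag
    rw [mul_assoc, Real.sqrt_div (mul_pos hτ (hku c)).le,
      Real.sqrt_mul hτ.le, div_eq_mul_inv]
  constructor
  · ext c c'
    have lhs : Qbarr K N G g T0 Tv τ c c'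
        = (Real.sqrt (Qr K N G g T0 Tv τ c c))⁻¹ * Qr K N G g T0 Tv τ c c'
          * (Real.sqrt (Qr K N G g T0 Tv τ c' c'))⁻¹ := by
      simp [Qbarr, Matrix.mul_diagonal, Matrix.diagonal_mul]
    have rhs : (1 + diagonal (fun c => Real.sqrt (Cdiag K N G g Tv τ c)) * Abar K N G g *
          diagonal (fun c => Real.sqrt (Cdiag K N G g Tv τ c))) c c'
        = (if c = c' then (1:ℝ) else 0)
          + Real.sqrt (Cdiag K N G g Tv τ c)
            * ((Real.sqrt (((K:ℝ) - 1) * Ur K N G g c c))⁻¹ * Ar K N G g c c'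
              * (Real.sqrt (((K:ℝ) - 1) * Ur K N G g c' c'))⁻¹)
            * Real.sqrt (Cdiag K N G g Tv τ c') := by
      simp [Abar, Matrix.mul_diagonal, Matrix.diagonal_mul, Matrix.one_apply]
    rw [lhs, rhs]
    by_cases h : c = c'
    · subst h
      have hAr : Ar K N G g c c = 0 := by simp [Ar]
      rw [hAr, hQrd]
      have hne : Real.sqrt (Tv c.1 + τ * Ur K N G g c c) ≠ 0 :=
        (Real.sqrt_pos.mpr (hq c)).ne'
      simp only [mul_zero, zero_mul, add_zero, if_pos rfl]
      rw [← Real.mul_self_sqrt (hq c).le]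
      field_simp
      simp [Real.sqrt_sq (Real.sqrt_nonneg _)]
    · have hAr : Ar K N G g c c' = Ur K N G g c c' := by
        simp [Ar, Matrix.diagonal_apply, h]
      rw [hAr, hQr c c', if_neg h, zero_add, if_neg h, zero_add, hQrd, hQrd,
        hC c, hC c']
      have h1 : Real.sqrt (((K:ℝ) - 1) * Ur K N G g c c) ≠ 0 :=
        (Real.sqrt_pos.mpr (hku c)).ne'
      have h2 : Real.sqrt (((K:ℝ) - 1) * Ur K N G g c' c') ≠ 0 :=
        (Real.sqrt_pos.mpr (hku c')).ne'
      have h3 : Real.sqrt (Tv c.1 + τ * Ur K N G g c c) ≠ 0 :=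
        (Real.sqrt_pos.mpr (hq c)).ne'
      have h4 : Real.sqrt (Tv c'.1 + τ * Ur K N G g c' c') ≠ 0 :=
        (Real.sqrt_pos.mpr (hq c')).ne'
      have hτs : Real.sqrt τ * Real.sqrt τ = τ := Real.mul_self_sqrt hτ.le
      set a := Real.sqrt (((K:ℝ) - 1) * Ur K N G g c c) with ha
      set b := Real.sqrt (((K:ℝ) - 1) * Ur K N G g c' c') with hb
      set s1 := Real.sqrt (Tv c.1 + τ * Ur K N G g c c) with hs1
      set s2 := Real.sqrt (Tv c'.1 + τ * Ur K N G g c' c') with hs2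
      set E := Ur K N G g c c' with hE
      have hrw : Real.sqrt τ * a * s1⁻¹ * (a⁻¹ * E * b⁻¹) * (Real.sqrt τ * b * s2⁻¹)
          = (Real.sqrt τ * Real.sqrt τ) * (a * a⁻¹) * (b⁻¹ * b) * (s1⁻¹ * E * s2⁻¹) := by
        ring
      rw [hrw, hτs, mul_inv_cancel₀ h1, inv_mul_cancel₀ h2]
      ring
  · intro c
    refine ⟨hCpos c, ?_⟩
    unfold Cdiag
    rw [div_le_iff₀ (hq c)]
    have := hTv c.1
    nlinarith [hu c, hτ]


end Crossed
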